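/- arXiv:2501.09616 — 2 statements merged into one kernel-verified Lean document; each statement's English description precedes it below -/
import Mathlib

section
/- Let A(z) = I + A_1 z + ... + A_q z^q and B(z) = B_0 + B_1 z + ... + B_r z^r be polynomial matrices of sizes m×m and m×l respectively, with A(z) having invertible leading constant term I (hence invertible as a matrix over rational functions). If rank([A_q B_r]) < m, then there exists a nonzero m×m constant matrix D with D·A_q = 0 and D·B_r = 0 such that the polynomial matrices Ã(z) := (I + Dz)A(z) and B̃(z) := (I + Dz)B(z) satisfy: Ã has degree at most q, B̃ has degree at most r, Ã(0) = I, (Ã, B̃) ≠ (A, B), and Ã(z)^{-1}B̃(z) = A(z)^{-1}B(z) as rational function matrices. -/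
open Polynomial Matrix

/-- The embedding of real polynomials into real rational functions. -/
noncomputable def φR : Polynomial ℝ → RatFunc ℝ := algebraMap (Polynomial ℝ) (RatFunc ℝ)

/-- Degree bound helper: multiplying by `1 + X • D.map C` with `D * (leading coeff) = 0`
preserves the degree bound. -/
lemma aux_deg {m n q : ℕ} (D : Matrix (Fin m) (Fin m) ℝ)
    (A : Matrix (Fin m) (Fin n) (Polynomial ℝ))
    (hdeg : ∀ i j, (A i j).natDegree ≤ q)
    (hD : D * (A.map fun p => p.coeff q) = 0) (i : Fin m) (j : Fin n) :
    ((((1 : Matrix (Fin m) (Fin m) (Polynomial ℝ)) + (X : Polynomial ℝ) • D.map C) * A) i j).natDegree ≤ q := by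
  have hrw : ((1 : Matrix (Fin m) (Fin m) (Polynomial ℝ)) + (X : Polynomial ℝ) • D.map C) * A
      = A + (X : Polynomial ℝ) • (D.map C * A) := by
    rw [Matrix.add_mul, Matrix.one_mul, Matrix.smul_mul]
  rw [hrw, Polynomial.natDegree_le_iff_coeff_eq_zero]
  intro k hk
  obtain ⟨k, rfl⟩ : ∃ k', k = k' + 1 := ⟨k - 1, by omega⟩
  rw [Matrix.add_apply, Polynomial.coeff_add, Matrix.smul_apply, smul_eq_mul,
    Polynomial.coeff_X_mul, Matrix.mul_apply, Polynomial.finset_sum_coeff]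
  have h1 : (A i j).coeff (k + 1) = 0 :=
    Polynomial.coeff_eq_zero_of_natDegree_lt (lt_of_le_of_lt (hdeg i j) hk)
  rw [h1, zero_add]
  rcases Nat.lt_or_ge k q with hkq | hkq
  · omega
  rcases Nat.eq_or_lt_of_le hkq with hkq | hkq
  · subst hkq
    have := congrFun (congrFun hD i) j
    simp only [Matrix.mul_apply, Matrix.map_apply, Matrix.zero_apply] at this
    calc (∑ x : Fin m, ((D.map C) i x * A x j).coeff q)
        = ∑ x : Fin m, D i x * (A x j).coeff q := by
          refine Finset.sum_congr rfl fun x _ => ?_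
          rw [Matrix.map_apply, Polynomial.coeff_C_mul]
      _ = 0 := this
  · refine Finset.sum_eq_zero fun x _ => ?_
    rw [Matrix.map_apply, Polynomial.coeff_C_mul,
      Polynomial.coeff_eq_zero_of_natDegree_lt (lt_of_le_of_lt (hdeg x j) hkq), mul_zero]

/-- Necessity of the rank condition for identifiability: if `rank [A_q B_r] < m`, there is
a nonzero `D` with `D A_q = 0`, `D B_r = 0` such that `Ã = (I + Dz)A`, `B̃ = (I + Dz)B`
have degrees at most `q`, `r`, `Ã(0) = I`, `(Ã, B̃) ≠ (A, B)`, and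
`Ã⁻¹ B̃ = A⁻¹ B` over rational functions. -/
theorem stmt_4 (m l q r : ℕ)
    (A : Matrix (Fin m) (Fin m) (Polynomial ℝ)) (B : Matrix (Fin m) (Fin l) (Polynomial ℝ))
    (hA0 : A.map (fun p => p.eval 0) = 1)
    (hAdeg : ∀ i j, (A i j).natDegree ≤ q) (hBdeg : ∀ i j, (B i j).natDegree ≤ r)
    (hrank : (Matrix.fromCols (A.map fun p => p.coeff q) (B.map fun p => p.coeff r)).rank < m) :
    ∃ (D : Matrix (Fin m) (Fin m) ℝ) (AT : Matrix (Fin m) (Fin m) (Polynomial ℝ))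
      (BT : Matrix (Fin m) (Fin l) (Polynomial ℝ)),
      D ≠ 0 ∧
      D * (A.map fun p => p.coeff q) = 0 ∧
      D * (B.map fun p => p.coeff r) = 0 ∧
      AT = ((1 : Matrix (Fin m) (Fin m) (Polynomial ℝ)) + (X : Polynomial ℝ) • D.map C) * A ∧
      BT = ((1 : Matrix (Fin m) (Fin m) (Polynomial ℝ)) + (X : Polynomial ℝ) • D.map C) * B ∧
      (∀ i j, (AT i j).natDegree ≤ q) ∧
      (∀ i j, (BT i j).natDegree ≤ r) ∧
      AT.map (fun p => p.eval 0) = 1 ∧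
      (AT, BT) ≠ (A, B) ∧
      (AT.map φR)⁻¹ * BT.map φR = (A.map φR)⁻¹ * B.map φR := by
  classical
  set Aq : Matrix (Fin m) (Fin m) ℝ := A.map fun p => p.coeff q with hAq
  set Br : Matrix (Fin m) (Fin l) ℝ := B.map fun p => p.coeff r with hBr
  set M : Matrix (Fin m) (Fin m ⊕ Fin l) ℝ := Matrix.fromCols Aq Br with hM
  -- find a nonzero left null vector v
  have hker : LinearMap.ker (Mᵀ.mulVecLin) ≠ ⊥ := by
    intro hbot
    have h1 := LinearMap.finrank_range_add_finrank_ker (Mᵀ.mulVecLin)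
    rw [hbot, finrank_bot, add_zero, Module.finrank_fin_fun] at h1
    have h2 : Mᵀ.rank = m := h1
    rw [Matrix.rank_transpose] at h2
    omega
  obtain ⟨v, hvmem, hv0⟩ := (Submodule.ne_bot_iff _).mp hker
  have hv : v ᵥ* M = 0 := by
    have := hvmem
    rw [LinearMap.mem_ker, Matrix.mulVecLin_apply, Matrix.mulVec_transpose] at this
    exact this
  have hvA : v ᵥ* Aq = 0 := by
    funext j
    have := congrFun hv (Sum.inl j)
    simpa [Matrix.vecMul, dotProduct, hM] using this
  have hvB : v ᵥ* Br = 0 := by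
    funext j
    have := congrFun hv (Sum.inr j)
    simpa [Matrix.vecMul, dotProduct, hM] using this
  set D : Matrix (Fin m) (Fin m) ℝ := Matrix.of fun _ j => v j with hD
  have hDA : D * Aq = 0 := by
    ext i k
    have := congrFun hvA k
    simpa [Matrix.mul_apply, Matrix.vecMul, dotProduct, hD] using this
  have hDB : D * Br = 0 := by
    ext i k
    have := congrFun hvB k
    simpa [Matrix.mul_apply, Matrix.vecMul, dotProduct, hD] using this
  obtain ⟨j0, hj0⟩ : ∃ j, v j ≠ 0 := Function.ne_iff.mp hv0
  have hDne : D ≠ 0 := fun h => hj0 (by simpa [hD] using congrFun (congrFun h j0) j0)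
  set U : Matrix (Fin m) (Fin m) (Polynomial ℝ) :=
    (1 : Matrix (Fin m) (Fin m) (Polynomial ℝ)) + (X : Polynomial ℝ) • D.map C with hU
  refine ⟨D, U * A, U * B, hDne, hDA, hDB, rfl, rfl, ?_, ?_, ?_, ?_, ?_⟩
  · exact aux_deg D A hAdeg hDA
  · exact aux_deg D B hBdeg hDB
  · -- eval at 0 is 1
    have hUm : U.map (fun p => p.eval (0:ℝ)) = 1 := by
      ext i j
      simp [hU, Matrix.map_apply, Matrix.add_apply, Matrix.smul_apply, Matrix.one_apply,
        apply_ite (fun p : Polynomial ℝ => p.eval 0)]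
    have : (U * A).map (fun p => p.eval (0:ℝ)) =
        U.map (fun p => p.eval (0:ℝ)) * A.map (fun p => p.eval (0:ℝ)) := by
      exact Matrix.map_mul (f := Polynomial.evalRingHom (0:ℝ))
    rw [this, hUm, hA0, one_mul]
  · -- (AT, BT) ≠ (A, B)
    intro h
    have hAT : U * A = A := congrArg Prod.fst h
    have hexp : U * A = A + (X : Polynomial ℝ) • (D.map C * A) := by
      rw [hU, Matrix.add_mul, Matrix.one_mul, Matrix.smul_mul]
    have hX : (X : Polynomial ℝ) • (D.map C * A) = 0 := by
      rw [hexp] at hAT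
      rwa [add_eq_left] at hAT
    have hDCA : D.map C * A = 0 := by
      refine Matrix.ext fun i j => ?_
      have := congrFun (congrFun hX i) j
      simp only [Matrix.smul_apply, smul_eq_mul, Matrix.zero_apply, mul_eq_zero] at this
      exact this.resolve_left X_ne_zero
    -- evaluate at 0 to get D = 0
    apply hDne
    have : (D.map C * A).map (fun p => p.eval (0:ℝ)) =
        (D.map C).map (fun p => p.eval (0:ℝ)) * A.map (fun p => p.eval (0:ℝ)) :=
      Matrix.map_mul (f := Polynomial.evalRingHom (0:ℝ))
    rw [hDCA] at this
    have hDCid : (D.map C).map (fun p => p.eval (0:ℝ)) = D := by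
      ext i j; simp [Matrix.map_apply]
    rw [hDCid, hA0, mul_one] at this
    have : (0 : Matrix (Fin m) (Fin m) (Polynomial ℝ)).map (fun p => p.eval (0:ℝ)) = D := this
    simpa using this.symm
  · -- rational function identity
    set φ : Polynomial ℝ →+* RatFunc ℝ := algebraMap (Polynomial ℝ) (RatFunc ℝ) with hφ
    have hφR : φR = ⇑φ := rfl
    have hmapA : (U * A).map φR = U.map ⇑φ * A.map ⇑φ := by
      rw [hφR]; exact Matrix.map_mul
    have hmapB : (U * B).map φR = U.map ⇑φ * B.map ⇑φ := by
      rw [hφR]; exact Matrix.map_mul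
    have hUdet : IsUnit (U.map ⇑φ).det := by
      have h1 : (U.map ⇑φ).det = φ U.det := (RingHom.map_det φ U).symm
      have h2 : U.det ≠ 0 := by
        intro h
        have h3 : (U.det).eval 0 = 1 := by
          have : U.map (fun p => p.eval (0:ℝ)) = 1 := by
            ext i j
            simp [hU, Matrix.map_apply, Matrix.add_apply, Matrix.smul_apply, Matrix.one_apply,
              apply_ite (fun p : Polynomial ℝ => p.eval 0)]
          have := (RingHom.map_det (Polynomial.evalRingHom (0:ℝ)) U)
          simp only [RingHom.mapMatrix_apply] at this
          rw [show U.map ⇑(Polynomial.evalRingHom (0:ℝ)) = U.map (fun p => p.eval (0:ℝ)) from rfl,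
            ‹U.map (fun p => p.eval (0:ℝ)) = 1›] at this
          simpa using this
        rw [h] at h3
        simp at h3
      rw [h1]
      refine isUnit_iff_ne_zero.mpr ?_
      intro h
      exact h2 ((map_eq_zero_iff φ (IsFractionRing.injective (Polynomial ℝ) (RatFunc ℝ))).mp h)
    rw [hmapA, hmapB, Matrix.mul_inv_rev, hφR, Matrix.mul_assoc, ← Matrix.mul_assoc ((U.map ⇑φ)⁻¹),
      Matrix.nonsing_inv_mul _ hUdet, Matrix.one_mul]
end

section
/- Let A(z) = I + A_1 z + ... + A_q z^q (A_q ≠ 0) and B(z) = B_0 + ... + B_r z^r (B_r ≠ 0) be left coprime polynomial matrices (m×m and m×l) with rank([A_q B_r]) = m. If Ã(z), B̃(z) are polynomial matrices of degrees at most q and r respectively, with Ã(0) = I, Ã invertible over rational functions, and Ã(z)^{-1}B̃(z) = A(z)^{-1}B(z), then Ã(z) = A(z) and B̃(z) = B(z). -/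
open Polynomial Matrix

lemma φR_eq : φR = ⇑(algebraMap (Polynomial ℝ) (RatFunc ℝ)) := rfl

lemma map_φR_mul {a b c : Type*} [Fintype b] (M : Matrix a b (Polynomial ℝ))
    (N : Matrix b c (Polynomial ℝ)) :
    (M * N).map φR = M.map φR * N.map φR := by
  rw [φR_eq]; exact Matrix.map_mul

lemma map_eval0_mul {a b c : Type*} [Fintype b] (M : Matrix a b (Polynomial ℝ))
    (N : Matrix b c (Polynomial ℝ)) :
    (M * N).map (fun p => p.eval 0)
      = M.map (fun p => p.eval 0) * N.map (fun p => p.eval 0) :=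
  Matrix.map_mul (f := Polynomial.evalRingHom (0 : ℝ))

/-- Sufficiency direction of identifiability of the low rank ARMAX graphical model:
if `A, B` are left coprime with `A(0) = I`, `A_q ≠ 0`, `B_r ≠ 0` and
`rank [A_q B_r] = m`, then any pair `(Ã, B̃)` of degrees at most `(q, r)` with
`Ã(0) = I` and the same transfer function equals `(A, B)`. -/
theorem stmt_6 (m l q r : ℕ)
    (A AT : Matrix (Fin m) (Fin m) (Polynomial ℝ))
    (B BT : Matrix (Fin m) (Fin l) (Polynomial ℝ))
    (hA0 : A.map (fun p => p.eval 0) = 1)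
    (hAdeg : ∀ i j, (A i j).natDegree ≤ q) (hBdeg : ∀ i j, (B i j).natDegree ≤ r)
    (hAq : A.map (fun p => p.coeff q) ≠ 0) (hBr : B.map (fun p => p.coeff r) ≠ 0)
    (hcop : ∃ (M1 : Matrix (Fin m) (Fin m) (Polynomial ℝ))
      (M2 : Matrix (Fin l) (Fin m) (Polynomial ℝ)), A * M1 + B * M2 = 1)
    (hrank : (Matrix.fromCols (A.map fun p => p.coeff q) (B.map fun p => p.coeff r)).rank = m)
    (hATdeg : ∀ i j, (AT i j).natDegree ≤ q) (hBTdeg : ∀ i j, (BT i j).natDegree ≤ r)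
    (hAT0 : AT.map (fun p => p.eval 0) = 1)
    (hATinv : IsUnit (AT.map φR).det)
    (htf : (AT.map φR)⁻¹ * BT.map φR = (A.map φR)⁻¹ * B.map φR) :
    AT = A ∧ BT = B := by
  obtain ⟨M1, M2, hM⟩ := hcop
  have hinj : Function.Injective φR := by
    rw [φR_eq]; exact IsFractionRing.injective _ _
  -- `A` is invertible over rational functions
  have hdetA0 : A.det ≠ 0 := by
    intro hd
    have h1 : Polynomial.eval 0 A.det = (A.map (fun p => p.eval 0)).det :=
      (Polynomial.evalRingHom (0 : ℝ)).map_det A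
    rw [hd, hA0, Matrix.det_one] at h1
    simp at h1
  have hdetA : IsUnit ((A.map φR).det) := by
    have e : (A.map φR).det = φR A.det :=
      ((algebraMap (Polynomial ℝ) (RatFunc ℝ)).map_det A).symm
    rw [e]
    exact isUnit_iff_ne_zero.mpr fun h => hdetA0
      (hinj (show φR A.det = φR 0 by rw [h, φR_eq, map_zero]))
  -- transfer function identity
  have hBT : BT.map φR = AT.map φR * ((A.map φR)⁻¹ * B.map φR) := by
    rw [← htf, Matrix.mul_nonsing_inv_cancel_left _ _ hATinv]
  -- mapped coprimeness
  have hMφ : A.map φR * M1.map φR + B.map φR * M2.map φR = 1 := by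
    have h := congrArg (fun X : Matrix (Fin m) (Fin m) (Polynomial ℝ) => X.map φR) hM
    rw [Matrix.map_add _ (fun a b => by rw [φR_eq]; exact map_add _ a b),
      map_φR_mul, map_φR_mul] at h
    rw [h, φR_eq]
    exact Matrix.map_one _ (map_zero _) (map_one _)
  -- the unimodular-candidate factor
  obtain ⟨Up, hUpdef⟩ : ∃ U : Matrix (Fin m) (Fin m) (Polynomial ℝ),
      U = AT * M1 + BT * M2 := ⟨_, rfl⟩
  have hUpφ : Up.map φR = AT.map φR * (A.map φR)⁻¹ := by
    rw [hUpdef,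
      Matrix.map_add _ (fun a b => by rw [φR_eq]; exact map_add _ a b),
      map_φR_mul, map_φR_mul, hBT]
    calc AT.map φR * M1.map φR + AT.map φR * ((A.map φR)⁻¹ * B.map φR) * M2.map φR
        = AT.map φR * (A.map φR)⁻¹ *
            (A.map φR * M1.map φR + B.map φR * M2.map φR) := by
          rw [Matrix.mul_add]
          congr 1
          · rw [Matrix.mul_assoc, Matrix.nonsing_inv_mul_cancel_left _ _ hdetA]
          · rw [Matrix.mul_assoc, Matrix.mul_assoc, Matrix.mul_assoc]
      _ = AT.map φR * (A.map φR)⁻¹ := by rw [hMφ, Matrix.mul_one]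
  have hUA : Up * A = AT := by
    apply Matrix.map_injective hinj
    show (Up * A).map φR = AT.map φR
    rw [map_φR_mul, hUpφ, Matrix.nonsing_inv_mul_cancel_right _ _ hdetA]
  have hUB : Up * B = BT := by
    apply Matrix.map_injective hinj
    show (Up * B).map φR = BT.map φR
    rw [map_φR_mul, hUpφ, hBT, Matrix.mul_assoc]
  -- `Up(0) = 1`
  have hU0 : Up.map (fun p => p.eval 0) = 1 := by
    have h := congrArg (fun X : Matrix (Fin m) (Fin m) (Polynomial ℝ)
      => X.map (fun p => p.eval 0)) hUA
    simp only [map_eval0_mul, hA0, hAT0, Matrix.mul_one] at h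
    exact h
  -- the degree of `Up`
  obtain ⟨s, hsdef⟩ : ∃ s, s = Finset.univ.sup
      (fun ij : Fin m × Fin m => (Up ij.1 ij.2).natDegree) := ⟨_, rfl⟩
  have hUdeg : ∀ i j, (Up i j).natDegree ≤ s := fun i j => by
    rw [hsdef]
    exact Finset.le_sup (f := fun ij : Fin m × Fin m => (Up ij.1 ij.2).natDegree)
      (Finset.mem_univ (i, j))
  -- `Up` is constant
  have hs0 : s = 0 := by
    by_contra hne
    obtain ⟨Us, hUsdef⟩ : ∃ U, U = Up.map (fun p => p.coeff s) := ⟨_, rfl⟩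
    have hUsA : Us * A.map (fun p => p.coeff q) = 0 := by
      ext i j
      have hco : ((Up * A) i j).coeff (s + q) = ∑ n, (Up i n).coeff s * (A n j).coeff q := by
        rw [Matrix.mul_apply, Polynomial.finset_sum_coeff]
        exact Finset.sum_congr rfl fun n _ =>
          Polynomial.coeff_mul_add_eq_of_natDegree_le (hUdeg i n) (hAdeg n j)
      rw [hUA] at hco
      have hz : (AT i j).coeff (s + q) = 0 :=
        Polynomial.coeff_eq_zero_of_natDegree_lt
          (lt_of_le_of_lt (hATdeg i j) (by omega))
      simp only [Matrix.zero_apply, Matrix.mul_apply, hUsdef, Matrix.map_apply]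
      rw [← hco, hz]
    have hUsB : Us * B.map (fun p => p.coeff r) = 0 := by
      ext i j
      have hco : ((Up * B) i j).coeff (s + r) = ∑ n, (Up i n).coeff s * (B n j).coeff r := by
        rw [Matrix.mul_apply, Polynomial.finset_sum_coeff]
        exact Finset.sum_congr rfl fun n _ =>
          Polynomial.coeff_mul_add_eq_of_natDegree_le (hUdeg i n) (hBdeg n j)
      rw [hUB] at hco
      have hz : (BT i j).coeff (s + r) = 0 :=
        Polynomial.coeff_eq_zero_of_natDegree_lt
          (lt_of_le_of_lt (hBTdeg i j) (by omega))
      simp only [Matrix.zero_apply, Matrix.mul_apply, hUsdef, Matrix.map_apply]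
      rw [← hco, hz]
    obtain ⟨Mq, hMqdef⟩ : ∃ M, M = Matrix.fromCols (A.map fun p => p.coeff q)
      (B.map fun p => p.coeff r) := ⟨_, rfl⟩
    have hUsM : Us * Mq = 0 := by
      rw [hMqdef, Matrix.mul_fromCols, hUsA, hUsB, Matrix.fromCols_zero]
    have hsurj : Function.Surjective Mq.mulVecLin := by
      rw [← LinearMap.range_eq_top]
      apply Submodule.eq_top_of_finrank_eq
      have : Module.finrank ℝ (LinearMap.range Mq.mulVecLin) = Mq.rank := rfl
      rw [this, hMqdef, hrank]
      simp [Module.finrank_fintype_fun_eq_card]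
    have hUs0 : Us = 0 := by
      ext i j
      obtain ⟨w, hw⟩ := hsurj (Pi.single j 1)
      have hmv : Us.mulVec (Pi.single j 1) = 0 := by
        rw [← hw]
        show Us.mulVec (Mq.mulVec w) = 0
        rw [Matrix.mulVec_mulVec, hUsM, Matrix.zero_mulVec]
      have := congrFun hmv i
      simpa [Matrix.mulVec_single] using this
    -- but `Us ≠ 0` since some entry has degree exactly `s ≥ 1`
    have hnonempty : (Finset.univ : Finset (Fin m × Fin m)).Nonempty := by
      rcases (Finset.univ : Finset (Fin m × Fin m)).eq_empty_or_nonempty with h | h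
      · exfalso; apply hne; rw [hsdef, h, Finset.sup_empty]; rfl
      · exact h
    obtain ⟨⟨i, j⟩, -, hij⟩ := Finset.exists_mem_eq_sup
      (Finset.univ : Finset (Fin m × Fin m)) hnonempty
      (fun ij : Fin m × Fin m => (Up ij.1 ij.2).natDegree)
    have hPne : Up i j ≠ 0 := by
      intro h
      apply hne
      rw [hsdef, hij, h, Polynomial.natDegree_zero]
    have hc0 : (Up i j).coeff s = 0 := by
      have := congrFun (congrFun hUs0 i) j
      simpa [hUsdef] using this
    rw [← hsdef] at hij
    rw [hij] at hc0
    exact hPne (Polynomial.leadingCoeff_eq_zero.mp hc0)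
  -- hence `Up = 1`
  have hUp1 : Up = 1 := by
    ext i j
    have hd : (Up i j).natDegree ≤ 0 := by rw [← hs0]; exact hUdeg i j
    have hC : Up i j = Polynomial.C ((Up i j).coeff 0) :=
      Polynomial.eq_C_of_natDegree_le_zero hd
    have h1 := congrFun (congrFun hU0 i) j
    simp only [Matrix.map_apply] at h1
    rw [Polynomial.coeff_zero_eq_eval_zero, h1] at hC
    rw [hC]
    by_cases hij : i = j <;> simp [Matrix.one_apply, hij]
  exact ⟨by rw [← hUA, hUp1, Matrix.one_mul], by rw [← hUB, hUp1, Matrix.one_mul]⟩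
end
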